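/- With the notation of the matrix setup: for every a ∈ F_{q^n} with a ≠ 0, one has (τ − Id)(F_q^{2n}) + (σ_a·τ·σ_a⁻¹ − Id)(F_q^{2n}) = F_q^{2n}. Consequently, for any field K, the only group homomorphism ν : (F_q^{2n}, +) → Kˣ satisfying both ν(τ·v) = ν(v) and ν((σ_a·τ·σ_a⁻¹)·v) = ν(v) for all v ∈ F_q^{2n} is the trivial character. -/

import Mathlib

open scoped BigOperators
open Matrix

noncomputable section

variable {p m n : ℕ} (Fq : Type) [Field Fq] [Fintype Fq]
variable (E : Type) [Field E] [Algebra Fq E]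

/-- The block matrix `τ = [[Id, 0],[Id, Id]]` of the matrix setup. -/
def tauMat : Matrix (Fin n ⊕ Fin n) (Fin n ⊕ Fin n) Fq :=
  Matrix.fromBlocks 1 0 1 1

/-- The block matrix `σ_a = [[Id, Φ(a)],[0, Id]]` of the matrix setup, where
`Φ : F_{q^n} → M_n(F_q)` sends `a` to the matrix of multiplication by `a` in the chosen
basis. -/
def sigmaMat (b : Module.Basis (Fin n) Fq E) (a : E) : Matrix (Fin n ⊕ Fin n) (Fin n ⊕ Fin n) Fq :=
  Matrix.fromBlocks 1 (Algebra.leftMulMatrix b a) 0 1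

/-- With the notation of the matrix setup: for every `a ∈ F_{q^n}` with `a ≠ 0`, one has
`(τ − Id)(F_q^{2n}) + (σ_a·τ·σ_a⁻¹ − Id)(F_q^{2n}) = F_q^{2n}`.  Consequently, for any
field `K`, the only group homomorphism `ν : (F_q^{2n}, +) → Kˣ` satisfying both
`ν(τ·v) = ν(v)` and `ν((σ_a·τ·σ_a⁻¹)·v) = ν(v)` for all `v ∈ F_q^{2n}` is the trivial
character. -/
theorem stmt15 (hp : p.Prime) (hq : Fintype.card Fq = p ^ m) (hm : 1 ≤ m) (hn : 1 ≤ n)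
    (b : Module.Basis (Fin n) Fq E) (a : E) (ha : a ≠ 0) :
    LinearMap.range (tauMat Fq - 1 : Matrix (Fin n ⊕ Fin n) (Fin n ⊕ Fin n) Fq).mulVecLin ⊔
      LinearMap.range
        (sigmaMat Fq E b a * tauMat Fq * (sigmaMat Fq E b a)⁻¹ - 1).mulVecLin = ⊤ ∧
    ∀ (K : Type) (_ : Field K) (ν : Multiplicative ((Fin n ⊕ Fin n) → Fq) →* Kˣ),
      (∀ v : (Fin n ⊕ Fin n) → Fq,
        ν (Multiplicative.ofAdd ((tauMat Fq).mulVec v)) = ν (Multiplicative.ofAdd v)) →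
      (∀ v : (Fin n ⊕ Fin n) → Fq,
        ν (Multiplicative.ofAdd
            ((sigmaMat Fq E b a * tauMat Fq * (sigmaMat Fq E b a)⁻¹).mulVec v)) =
          ν (Multiplicative.ofAdd v)) →
      ν = 1 := by
  classical
  have hΦ : Algebra.leftMulMatrix b a * Algebra.leftMulMatrix b a⁻¹ = 1 := by
    rw [← _root_.map_mul, mul_inv_cancel₀ ha, _root_.map_one]
  set σ := sigmaMat Fq E b a with hσdef
  have hσinv : σ⁻¹ = Matrix.fromBlocks 1 (-(Algebra.leftMulMatrix b a)) 0 1 := by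
    apply Matrix.inv_eq_right_inv
    rw [hσdef, sigmaMat, Matrix.fromBlocks_multiply, ← Matrix.fromBlocks_one]
    simp
  have hσleft : σ⁻¹ * σ = 1 := by
    rw [hσinv, hσdef, sigmaMat, Matrix.fromBlocks_multiply, ← Matrix.fromBlocks_one]
    simp
  have key : ∀ w : (Fin n ⊕ Fin n) → Fq, ∃ u v : (Fin n ⊕ Fin n) → Fq,
      (tauMat Fq - 1 : Matrix (Fin n ⊕ Fin n) (Fin n ⊕ Fin n) Fq).mulVec u +
        (σ * tauMat Fq * σ⁻¹ - 1).mulVec v = w := by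
    intro w
    set x := (Algebra.leftMulMatrix b a⁻¹).mulVec (fun i => w (Sum.inl i)) with hx
    have hax : (Algebra.leftMulMatrix b a).mulVec x = fun i => w (Sum.inl i) := by
      rw [hx, Matrix.mulVec_mulVec, hΦ, Matrix.one_mulVec]
    refine ⟨Sum.elim ((fun i => w (Sum.inr i)) - x) 0, σ.mulVec (Sum.elim x 0), ?_⟩
    have h1 : (tauMat Fq - 1 : Matrix (Fin n ⊕ Fin n) (Fin n ⊕ Fin n) Fq).mulVec
        (Sum.elim ((fun i => w (Sum.inr i)) - x) 0)
        = Sum.elim (0 : Fin n → Fq) ((fun i => w (Sum.inr i)) - x) := by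
      rw [Matrix.sub_mulVec, Matrix.one_mulVec, tauMat, Matrix.fromBlocks_mulVec]
      ext (i | i) <;> simp
    have h2 : (σ * tauMat Fq * σ⁻¹ - 1).mulVec (σ.mulVec (Sum.elim x 0))
        = Sum.elim (fun i => w (Sum.inl i)) x := by
      rw [Matrix.sub_mulVec, Matrix.mulVec_mulVec, Matrix.mul_assoc, hσleft, Matrix.mul_one,
        Matrix.one_mulVec, ← Matrix.mulVec_mulVec, ← Matrix.mulVec_sub]
      have hτ : (tauMat Fq).mulVec (Sum.elim x 0) - Sum.elim x 0
          = Sum.elim (0 : Fin n → Fq) x := by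
        rw [tauMat, Matrix.fromBlocks_mulVec]
        ext (i | i) <;> simp
      rw [hτ, hσdef, sigmaMat, Matrix.fromBlocks_mulVec]
      ext (i | i) <;> simp [hax]
    rw [h1, h2]
    ext (i | i) <;> simp
  constructor
  · rw [eq_top_iff]
    intro w _
    obtain ⟨u, v, huv⟩ := key w
    rw [← huv]
    exact Submodule.add_mem_sup (LinearMap.mem_range.2 ⟨u, rfl⟩)
      (LinearMap.mem_range.2 ⟨v, rfl⟩)
  · intro K _ ν hτν hσν
    have gen : ∀ (M : Matrix (Fin n ⊕ Fin n) (Fin n ⊕ Fin n) Fq),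
        (∀ v, ν (Multiplicative.ofAdd (M.mulVec v)) = ν (Multiplicative.ofAdd v)) →
        ∀ v, ν (Multiplicative.ofAdd ((M - 1).mulVec v)) = 1 := by
      intro M hM v
      rw [Matrix.sub_mulVec, Matrix.one_mulVec, ofAdd_sub, map_div, hM]
      exact div_self' _
    refine MonoidHom.ext fun w => ?_
    obtain ⟨u, v, huv⟩ := key w.toAdd
    have hw : ν w = ν (Multiplicative.ofAdd ((tauMat Fq - 1).mulVec u)) *
        ν (Multiplicative.ofAdd ((σ * tauMat Fq * σ⁻¹ - 1).mulVec v)) := by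
      rw [← _root_.map_mul, ← ofAdd_add, huv]
      rfl
    rw [hw, gen _ hτν, gen _ hσν, one_mul]
    rfl

end
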